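/- Under the conditions of the saturation lemma, the maximizer z additionally satisfies z_j = λ c_j for all j ∈ {τ_{i+1},…,τ_R}, where λ = sqrt(r² − Σ_{m=1}^{i} a_{τ_m}²)/‖c_{τ_{i+1},…,τ_R}‖; in particular the unsaturated coordinates are proportional to the corresponding coordinates of c. -/

import Mathlib

/-- Under the conditions of the saturation lemma, the maximizer
`z` additionally satisfies `z_j = λ c_j` on the unsaturated indices
`j ∈ {τ_{i+1},…,τ_R}`, where
`λ = sqrt(r² − Σ_{m=1}^{i} a_{τ_m}²)/‖c_{τ_{i+1},…,τ_R}‖`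
(0-based: `z (τ m) = λ * c (τ m)` for `i ≤ m`). -/
theorem stmt_4 (R : ℕ) (hR : 1 ≤ R) (a c : Fin R → ℝ)
    (ha : ∀ j, 0 < a j) (hc : ∀ j, 0 < c j) (τ : Equiv.Perm (Fin R))
    (hord : ∀ i j : Fin R, i ≤ j → c (τ j) / a (τ j) ≤ c (τ i) / a (τ i))
    (rseq : ℕ → ℝ)
    (hr0 : rseq 0 = 0)
    (hri : ∀ i, 1 ≤ i → (hiR : i ≤ R) → rseq i =
      Real.sqrt ((c (τ ⟨i - 1, by omega⟩) / a (τ ⟨i - 1, by omega⟩))⁻¹ ^ 2 *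
          (∑ m ∈ Finset.univ.filter (fun m : Fin R => i ≤ (m : ℕ)), (c (τ m)) ^ 2) +
        ∑ m ∈ Finset.univ.filter (fun m : Fin R => (m : ℕ) < i), (a (τ m)) ^ 2))
    (i : ℕ) (hi1 : 1 ≤ i) (hi : i ≤ R - 1) (r : ℝ)
    (hrlo : rseq i ≤ r) (hrhi : r ≤ rseq (i + 1))
    (z : Fin R → ℝ)
    (hz_sphere : ∑ j, (z j) ^ 2 = r ^ 2)
    (hz_box : ∀ j, 0 ≤ z j ∧ z j ≤ a j)
    (hz_max : ∀ y : Fin R → ℝ, (∑ j, (y j) ^ 2 = r ^ 2) →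
      (∀ j, 0 ≤ y j ∧ y j ≤ a j) → ∑ j, c j * y j ≤ ∑ j, c j * z j)
    (hsat : ∀ m : Fin R, (m : ℕ) < i → z (τ m) = a (τ m)) :
    ∀ m : Fin R, i ≤ (m : ℕ) → z (τ m) =
      (Real.sqrt (r ^ 2 - ∑ m ∈ Finset.univ.filter (fun m : Fin R => (m : ℕ) < i), (a (τ m)) ^ 2) /
        Real.sqrt (∑ m ∈ Finset.univ.filter (fun m : Fin R => i ≤ (m : ℕ)), (c (τ m)) ^ 2)) *
      c (τ m) := by
  have hiR : i < R := by omega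
  set S : Finset (Fin R) := Finset.univ.filter (fun m : Fin R => i ≤ (m : ℕ)) with hSdef
  set T : Finset (Fin R) := Finset.univ.filter (fun m : Fin R => (m : ℕ) < i) with hTdef
  set A : ℝ := ∑ m ∈ T, (a (τ m)) ^ 2 with hAdef
  set C : ℝ := ∑ m ∈ S, (c (τ m)) ^ 2 with hCdef
  have hmemS : ∀ m : Fin R, m ∈ S ↔ i ≤ (m : ℕ) := by
    intro m; simp [hSdef]
  have hmemT : ∀ m : Fin R, m ∈ T ↔ (m : ℕ) < i := by
    intro m; simp [hTdef]
  have hiS : (⟨i, hiR⟩ : Fin R) ∈ S := by simp [hSdef]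
  have hCpos : 0 < C := by
    apply Finset.sum_pos (fun m _ => pow_pos (hc _) 2) ⟨⟨i, hiR⟩, hiS⟩
  have hA0 : 0 ≤ A := Finset.sum_nonneg fun m _ => sq_nonneg _
  -- the ordering quantity at index i (0-based)
  set φ : ℝ := c (τ ⟨i, hiR⟩) / a (τ ⟨i, hiR⟩) with hφdef
  have hφpos : 0 < φ := div_pos (hc _) (ha _)
  -- compute rseq i ≥ 0 hence r ≥ 0
  have hrseqi : rseq i = Real.sqrt ((c (τ ⟨i - 1, by omega⟩) / a (τ ⟨i - 1, by omega⟩))⁻¹ ^ 2 * C + A) :=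
    hri i hi1 (by omega)
  have hr0' : 0 ≤ r := le_trans (by rw [hrseqi]; exact Real.sqrt_nonneg _) hrlo
  -- r² ≥ A
  have hinner_nonneg : 0 ≤ (c (τ ⟨i - 1, by omega⟩) / a (τ ⟨i - 1, by omega⟩))⁻¹ ^ 2 * C + A := by
    positivity
  have hr2A : A ≤ r ^ 2 := by
    have h1 : (rseq i) ^ 2 ≤ r ^ 2 := by
      apply pow_le_pow_left₀ (by rw [hrseqi]; exact Real.sqrt_nonneg _) hrlo
    rw [hrseqi, Real.sq_sqrt hinner_nonneg] at h1
    nlinarith [sq_nonneg (c (τ ⟨i - 1, by omega⟩) / a (τ ⟨i - 1, by omega⟩))⁻¹, hCpos.le,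
      mul_nonneg (sq_nonneg (c (τ ⟨i - 1, by omega⟩) / a (τ ⟨i - 1, by omega⟩))⁻¹) hCpos.le]
  set ρ : ℝ := Real.sqrt (r ^ 2 - A) with hρdef
  have hρ2 : ρ ^ 2 = r ^ 2 - A := Real.sq_sqrt (by linarith)
  have hρ0 : 0 ≤ ρ := Real.sqrt_nonneg _
  set t : ℝ := ρ / Real.sqrt C with htdef
  have ht0 : 0 ≤ t := div_nonneg hρ0 (Real.sqrt_nonneg _)
  have hsqrtC : Real.sqrt C ^ 2 = C := Real.sq_sqrt hCpos.le
  have hsqrtCpos : 0 < Real.sqrt C := Real.sqrt_pos.mpr hCpos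
  have ht2 : t ^ 2 = ρ ^ 2 / C := by
    rw [htdef, div_pow, hsqrtC]
  -- split sums at index i
  have hSsplit : S = insert (⟨i, hiR⟩ : Fin R) (Finset.univ.filter (fun m : Fin R => i + 1 ≤ (m : ℕ))) := by
    ext m; simp [hSdef, Fin.ext_iff]; omega
  have hTsplit : Finset.univ.filter (fun m : Fin R => (m : ℕ) < i + 1) = insert (⟨i, hiR⟩ : Fin R) T := by
    ext m; simp [hTdef, Fin.ext_iff]; omega
  have hinotS' : (⟨i, hiR⟩ : Fin R) ∉ Finset.univ.filter (fun m : Fin R => i + 1 ≤ (m : ℕ)) := by simp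
  have hinotT : (⟨i, hiR⟩ : Fin R) ∉ T := by simp [hTdef]
  -- key feasibility bound: ρ² ≤ φ⁻² C
  have hfeas : ρ ^ 2 ≤ φ⁻¹ ^ 2 * C := by
    have hr1 : rseq (i + 1) = Real.sqrt (φ⁻¹ ^ 2 *
        (∑ m ∈ Finset.univ.filter (fun m : Fin R => i + 1 ≤ (m : ℕ)), (c (τ m)) ^ 2) +
        ∑ m ∈ Finset.univ.filter (fun m : Fin R => (m : ℕ) < i + 1), (a (τ m)) ^ 2) := by
      have := hri (i + 1) (by omega) (by omega)
      convert this using 4 <;> simp [hφdef]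
    have hCs : C = (c (τ ⟨i, hiR⟩)) ^ 2 + ∑ m ∈ Finset.univ.filter (fun m : Fin R => i + 1 ≤ (m : ℕ)), (c (τ m)) ^ 2 := by
      rw [hCdef, hSsplit, Finset.sum_insert hinotS']
    have hAs : (∑ m ∈ Finset.univ.filter (fun m : Fin R => (m : ℕ) < i + 1), (a (τ m)) ^ 2)
        = (a (τ ⟨i, hiR⟩)) ^ 2 + A := by
      rw [hAdef, hTsplit, Finset.sum_insert hinotT]
    have harg : 0 ≤ φ⁻¹ ^ 2 *
        (∑ m ∈ Finset.univ.filter (fun m : Fin R => i + 1 ≤ (m : ℕ)), (c (τ m)) ^ 2) +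
        ∑ m ∈ Finset.univ.filter (fun m : Fin R => (m : ℕ) < i + 1), (a (τ m)) ^ 2 := by
      positivity
    have h1 : r ^ 2 ≤ (rseq (i + 1)) ^ 2 := by
      apply pow_le_pow_left₀ hr0' hrhi
    rw [hr1, Real.sq_sqrt harg] at h1
    have hkey : φ⁻¹ ^ 2 * (c (τ ⟨i, hiR⟩)) ^ 2 = (a (τ ⟨i, hiR⟩)) ^ 2 := by
      rw [hφdef, inv_div, div_pow, div_mul_eq_mul_div, mul_div_assoc,
        div_self (pow_ne_zero 2 (hc _).ne'), mul_one]
    rw [hAs] at h1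
    have : r ^ 2 ≤ φ⁻¹ ^ 2 * C + A := by
      rw [hCs, mul_add, hkey]
      linarith
    linarith [hρ2]
  -- pointwise feasibility of t * c on S
  have hptwise : ∀ m : Fin R, i ≤ (m : ℕ) → t * c (τ m) ≤ a (τ m) := by
    intro m hm
    have hordm : c (τ m) / a (τ m) ≤ φ := hord ⟨i, hiR⟩ m hm
    have hφm : 0 < c (τ m) / a (τ m) := div_pos (hc _) (ha _)
    have hinv : φ⁻¹ ≤ (c (τ m) / a (τ m))⁻¹ := by
      exact inv_anti₀ hφm hordm
    have hinv0 : 0 ≤ φ⁻¹ := (inv_pos.mpr hφpos).le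
    have ht2le : t ^ 2 ≤ ((c (τ m) / a (τ m))⁻¹) ^ 2 := by
      rw [ht2]
      refine le_trans ((div_le_iff₀ hCpos).mpr hfeas) ?_
      exact pow_le_pow_left₀ hinv0 hinv 2
    have hinvm0 : 0 ≤ (c (τ m) / a (τ m))⁻¹ := (inv_pos.mpr hφm).le
    have htle : t ≤ (c (τ m) / a (τ m))⁻¹ := by
      have h := Real.sqrt_le_sqrt ht2le
      rwa [Real.sqrt_sq ht0, Real.sqrt_sq hinvm0] at h
    have : (c (τ m) / a (τ m))⁻¹ = a (τ m) / c (τ m) := by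
      rw [inv_div]
    rw [this] at htle
    calc t * c (τ m) ≤ (a (τ m) / c (τ m)) * c (τ m) := by
          apply mul_le_mul_of_nonneg_right htle (hc _).le
        _ = a (τ m) := div_mul_cancel₀ _ (hc _).ne'
  -- candidate y
  set y : Fin R → ℝ := fun j => if ((τ.symm j : Fin R) : ℕ) < i then a j else t * c j with hydef
  have hyτ : ∀ m : Fin R, y (τ m) = if (m : ℕ) < i then a (τ m) else t * c (τ m) := by
    intro m; simp [hydef]
  have split : ∀ f : Fin R → ℝ, ∑ j, f j = ∑ m ∈ T, f (τ m) + ∑ m ∈ S, f (τ m) := by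
    intro f
    rw [← Equiv.sum_comp τ f,
      ← Finset.sum_filter_add_sum_filter_not Finset.univ (fun m : Fin R => (m : ℕ) < i)
        (fun m => f (τ m))]
    congr 1
    apply Finset.sum_congr _ fun _ _ => rfl
    ext m; simp [hSdef]
  -- y is on the sphere
  have hy_sphere : ∑ j, (y j) ^ 2 = r ^ 2 := by
    rw [split (fun j => (y j) ^ 2)]
    have h1 : ∑ m ∈ T, (y (τ m)) ^ 2 = A := by
      apply Finset.sum_congr rfl
      intro m hm
      rw [hyτ m, if_pos ((hmemT m).mp hm)]
    have h2 : ∑ m ∈ S, (y (τ m)) ^ 2 = t ^ 2 * C := by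
      rw [hCdef, Finset.mul_sum]
      apply Finset.sum_congr rfl
      intro m hm
      rw [hyτ m, if_neg (Nat.not_lt.mpr ((hmemS m).mp hm))]
      ring
    rw [h1, h2, ht2, div_mul_cancel₀ _ hCpos.ne']
    linarith [hρ2]
  -- y is in the box
  have hy_box : ∀ j, 0 ≤ y j ∧ y j ≤ a j := by
    intro j
    rw [hydef]
    by_cases hj : ((τ.symm j : Fin R) : ℕ) < i
    · simp only [hj, if_true]
      exact ⟨(ha j).le, le_refl _⟩
    · simp only [hj, if_false]
      constructor
      · exact mul_nonneg ht0 (hc j).le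
      · have := hptwise (τ.symm j) (Nat.not_lt.mp hj)
        simpa using this
  -- maximality gives t * C ≤ ∑_S c z
  have hE : t * C ≤ ∑ m ∈ S, c (τ m) * z (τ m) := by
    have hmax := hz_max y hy_sphere hy_box
    rw [split (fun j => c j * y j), split (fun j => c j * z j)] at hmax
    have h1 : ∑ m ∈ T, c (τ m) * y (τ m) = ∑ m ∈ T, c (τ m) * z (τ m) := by
      apply Finset.sum_congr rfl
      intro m hm
      rw [hyτ m, if_pos ((hmemT m).mp hm), hsat m ((hmemT m).mp hm)]
    have h2 : ∑ m ∈ S, c (τ m) * y (τ m) = t * C := by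
      rw [hCdef, Finset.mul_sum]
      apply Finset.sum_congr rfl
      intro m hm
      rw [hyτ m, if_neg (Nat.not_lt.mpr ((hmemS m).mp hm))]
      ring
    rw [h1, h2] at hmax
    linarith
  -- ∑_S z² = ρ²
  have hzS : ∑ m ∈ S, (z (τ m)) ^ 2 = ρ ^ 2 := by
    have hz := hz_sphere
    rw [split (fun j => (z j) ^ 2)] at hz
    have h1 : ∑ m ∈ T, (z (τ m)) ^ 2 = A := by
      apply Finset.sum_congr rfl
      intro m hm
      rw [hsat m ((hmemT m).mp hm)]
    rw [h1] at hz
    linarith [hρ2]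
  -- the squared-difference sum vanishes
  have hdiff : ∑ m ∈ S, (z (τ m) - t * c (τ m)) ^ 2 = 0 := by
    have hexp : ∑ m ∈ S, (z (τ m) - t * c (τ m)) ^ 2 =
        (∑ m ∈ S, (z (τ m)) ^ 2) - 2 * t * (∑ m ∈ S, c (τ m) * z (τ m)) + t ^ 2 * C := by
      rw [hCdef, Finset.mul_sum, Finset.mul_sum, ← Finset.sum_sub_distrib,
        ← Finset.sum_add_distrib]
      apply Finset.sum_congr rfl
      intro m _
      ring
    have ht2C : t ^ 2 * C = ρ ^ 2 := by rw [ht2, div_mul_cancel₀ _ hCpos.ne']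
    have h2 : 2 * t * (t * C) ≤ 2 * t * (∑ m ∈ S, c (τ m) * z (τ m)) :=
      mul_le_mul_of_nonneg_left hE (by linarith)
    have h3 : 2 * t * (t * C) = 2 * (t ^ 2 * C) := by ring
    have hle : ∑ m ∈ S, (z (τ m) - t * c (τ m)) ^ 2 ≤ 0 := by
      rw [hexp, hzS, ht2C]
      rw [h3, ht2C] at h2
      linarith
    have hge : 0 ≤ ∑ m ∈ S, (z (τ m) - t * c (τ m)) ^ 2 :=
      Finset.sum_nonneg fun m _ => sq_nonneg _
    linarith
  intro m hm
  have hmS : m ∈ S := (hmemS m).mpr hm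
  have h0 := (Finset.sum_eq_zero_iff_of_nonneg
    (fun m _ => sq_nonneg (z (τ m) - t * c (τ m)))).mp hdiff m hmS
  have hz0 : z (τ m) - t * c (τ m) = 0 := by
    exact pow_eq_zero_iff (by norm_num) |>.mp h0
  have hzeq : z (τ m) = t * c (τ m) := by linarith
  rw [hzeq, htdef, hρdef]
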